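/- There exist two computable equivalence relations E and F on ℕ whose join E ⊔ F in the lattice of equivalence relations (the smallest equivalence relation containing both) is not computable. Hence the computable equivalence relations do not form a sublattice of Setoid ℕ. -/

import Mathlib

open Nat.Partrec (Code)
open Nat.Partrec.Code

/-- `hb m = true` iff the machine coded by `(unpair m).1` halts on input `0`
within `(unpair m).2` steps. -/
def hb (m : ℕ) : Bool :=
  (evaln m.unpair.2 (Denumerable.ofNat Code m.unpair.1) 0).isSome

theorem hb_primrec : Primrec hb := by
  have h1 : Primrec fun m : ℕ => ((m.unpair.2, Denumerable.ofNat Code m.unpair.1), (0 : ℕ)) :=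
    ((Primrec.snd.comp .unpair).pair
      ((Primrec.ofNat Code).comp (Primrec.fst.comp .unpair))).pair (Primrec.const 0)
  exact Primrec.option_isSome.comp (primrec_evaln.comp h1)

/-- the halting set -/
def KK (n : ℕ) : Prop := ∃ s, hb (Nat.pair n s) = true

theorem hb_KK {m : ℕ} (h : hb m = true) : KK m.unpair.1 :=
  ⟨m.unpair.2, by rwa [Nat.pair_unpair]⟩

theorem KK_iff (n : ℕ) : KK n ↔ ((Denumerable.ofNat Code n).eval 0).Dom := by
  constructor
  · rintro ⟨s, hs⟩
    simp only [hb, Nat.unpair_pair] at hs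
    obtain ⟨x, hx⟩ := Option.isSome_iff_exists.1 hs
    exact Part.dom_iff_mem.2 ⟨x, evaln_complete.2 ⟨s, hx⟩⟩
  · intro h
    obtain ⟨x, hx⟩ := Part.dom_iff_mem.1 h
    obtain ⟨k, hk⟩ := evaln_complete.1 hx
    refine ⟨k, ?_⟩
    simp only [hb, Nat.unpair_pair]
    exact Option.isSome_iff_exists.2 ⟨x, hk⟩

def gE (x : ℕ) : ℕ :=
  if x.unpair.1 = 3 ∧ hb x.unpair.2 = true then Nat.pair 1 x.unpair.2.unpair.1
  else if x.unpair.1 = 4 ∧ hb x.unpair.2 = true then Nat.pair 2 x.unpair.2.unpair.1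
  else x

def gF (x : ℕ) : ℕ := if x.unpair.1 = 4 then Nat.pair 3 x.unpair.2 else x

theorem gE_primrec : Primrec gE := by
  have u1 : Primrec fun x : ℕ => x.unpair.1 := Primrec.fst.comp .unpair
  have u2 : Primrec fun x : ℕ => x.unpair.2 := Primrec.snd.comp .unpair
  have hcond3 : PrimrecPred fun x : ℕ => x.unpair.1 = 3 ∧ hb x.unpair.2 = true :=
    (PrimrecPred.and (Primrec.eq.comp u1 (Primrec.const 3))
      (Primrec.eq.comp (hb_primrec.comp u2) (Primrec.const true)))
  have hcond4 : PrimrecPred fun x : ℕ => x.unpair.1 = 4 ∧ hb x.unpair.2 = true :=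
    (PrimrecPred.and (Primrec.eq.comp u1 (Primrec.const 4))
      (Primrec.eq.comp (hb_primrec.comp u2) (Primrec.const true)))
  have hval1 : Primrec fun x : ℕ => Nat.pair 1 x.unpair.2.unpair.1 :=
    Primrec₂.natPair.comp (Primrec.const 1) (Primrec.fst.comp (Primrec.unpair.comp u2))
  have hval2 : Primrec fun x : ℕ => Nat.pair 2 x.unpair.2.unpair.1 :=
    Primrec₂.natPair.comp (Primrec.const 2) (Primrec.fst.comp (Primrec.unpair.comp u2))
  exact Primrec.ite hcond3 hval1 (Primrec.ite hcond4 hval2 Primrec.id)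

theorem gF_primrec : Primrec gF := by
  have u1 : Primrec fun x : ℕ => x.unpair.1 := Primrec.fst.comp .unpair
  have u2 : Primrec fun x : ℕ => x.unpair.2 := Primrec.snd.comp .unpair
  exact Primrec.ite (Primrec.eq.comp u1 (Primrec.const 4))
    (Primrec₂.natPair.comp (Primrec.const 3) u2) Primrec.id

/-- the kernel of a function as a setoid, with a definitionally simple relation -/
def kerS (g : ℕ → ℕ) : Setoid ℕ :=
  ⟨fun x y => g x = g y, ⟨fun _ => rfl, Eq.symm, Eq.trans⟩⟩

open Classical in
/-- collapsing map whose kernel contains the join -/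
noncomputable def hK (x : ℕ) : ℕ :=
  if x.unpair.1 = 2 ∧ KK x.unpair.2 then Nat.pair 1 x.unpair.2
  else if x.unpair.1 = 3 ∧ hb x.unpair.2 = true then Nat.pair 1 x.unpair.2.unpair.1
  else if x.unpair.1 = 4 then
    (if hb x.unpair.2 = true then Nat.pair 1 x.unpair.2.unpair.1 else Nat.pair 3 x.unpair.2)
  else x

open Classical in
noncomputable def hK' (y : ℕ) : ℕ :=
  if y.unpair.1 = 2 ∧ KK y.unpair.2 then Nat.pair 1 y.unpair.2
  else if y.unpair.1 = 4 then
    (if hb y.unpair.2 = true then Nat.pair 1 y.unpair.2.unpair.1 else Nat.pair 3 y.unpair.2)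
  else y

theorem hK_eq_hK'_gE (x : ℕ) : hK x = hK' (gE x) := by
  classical
  by_cases h3 : x.unpair.1 = 3 ∧ hb x.unpair.2 = true
  · simp [hK, hK', gE, h3, Nat.unpair_pair]
  · by_cases h4 : x.unpair.1 = 4 ∧ hb x.unpair.2 = true
    · have hk := hb_KK h4.2
      simp [hK, hK', gE, h3, h4, Nat.unpair_pair, hk]
    · simp only [gE, if_neg h3, if_neg h4, hK, hK']

theorem hK_eq_hK_gF (x : ℕ) : hK x = hK (gF x) := by
  classical
  by_cases h4 : x.unpair.1 = 4
  · by_cases hh : hb x.unpair.2 = true <;>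
      simp [hK, gF, h4, hh, Nat.unpair_pair]
  · simp [gF, h4]

theorem pair_ne (a b m n : ℕ) (h : a ≠ b) : Nat.pair a m ≠ Nat.pair b n := fun he => by
  have := congrArg (fun x => x.unpair.1) he
  simp [Nat.unpair_pair] at this; exact h this

/-- There are two computable equivalence relations on ℕ whose join is not computable;
hence the computable equivalence relations do not form a sublattice of `Setoid ℕ`. -/
theorem computable_not_closed_under_sup :
    ∃ E F : Setoid ℕ,
      ComputablePred (fun p : ℕ × ℕ => E.r p.1 p.2) ∧
      ComputablePred (fun p : ℕ × ℕ => F.r p.1 p.2) ∧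
      ¬ ComputablePred (fun p : ℕ × ℕ => (E ⊔ F).r p.1 p.2) := by
  refine ⟨kerS gE, kerS gF, ?_, ?_, ?_⟩
  · refine ⟨fun p => Nat.decEq _ _, ?_⟩
    exact (Primrec.eq.comp (gE_primrec.comp .fst) (gE_primrec.comp .snd)).decide.to_comp
  · refine ⟨fun p => Nat.decEq _ _, ?_⟩
    exact (Primrec.eq.comp (gF_primrec.comp .fst) (gF_primrec.comp .snd)).decide.to_comp
  · intro hC
    classical
    have hle : kerS gE ⊔ kerS gF ≤ kerS hK := by
      refine sup_le ?_ ?_ <;> rw [Setoid.le_def] <;> intro x y h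
      · show hK x = hK y
        rw [hK_eq_hK'_gE x, hK_eq_hK'_gE y, (h : gE x = gE y)]
      · show hK x = hK y
        rw [hK_eq_hK_gF x, hK_eq_hK_gF y, (h : gF x = gF y)]
    have key : ∀ n, (kerS gE ⊔ kerS gF).r (Nat.pair 1 n) (Nat.pair 2 n) ↔ KK n := by
      intro n
      constructor
      · intro h
        have h2 : hK (Nat.pair 1 n) = hK (Nat.pair 2 n) := Setoid.le_def.1 hle h
        by_contra hk
        simp only [hK, Nat.unpair_pair] at h2
        norm_num [hk] at h2
      · rintro ⟨s, hs⟩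
        set m := Nat.pair n s with hm
        have hEle : kerS gE ≤ kerS gE ⊔ kerS gF := le_sup_left
        have hFle : kerS gF ≤ kerS gE ⊔ kerS gF := le_sup_right
        have e1 : gE (Nat.pair 1 n) = gE (Nat.pair 3 m) := by
          simp [gE, Nat.unpair_pair, hm, show hb (Nat.pair n s) = true from hs]
        have e2 : gF (Nat.pair 3 m) = gF (Nat.pair 4 m) := by
          simp [gF, Nat.unpair_pair]
        have e3 : gE (Nat.pair 4 m) = gE (Nat.pair 2 n) := by
          simp [gE, Nat.unpair_pair, hm, show hb (Nat.pair n s) = true from hs]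
        exact (kerS gE ⊔ kerS gF).trans' (Setoid.le_def.1 hEle e1)
          ((kerS gE ⊔ kerS gF).trans' (Setoid.le_def.1 hFle e2) (Setoid.le_def.1 hEle e3))
    have hKK : ComputablePred KK := by
      obtain ⟨f, hf, hfe⟩ := ComputablePred.computable_iff.1 hC
      refine ComputablePred.computable_iff.2
        ⟨fun n => f (Nat.pair 1 n, Nat.pair 2 n), hf.comp (Computable.pair
          (Primrec₂.natPair.comp (Primrec.const 1) Primrec.id).to_comp
          (Primrec₂.natPair.comp (Primrec.const 2) Primrec.id).to_comp), ?_⟩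
      funext n
      have h1 := congrFun hfe (Nat.pair 1 n, Nat.pair 2 n)
      simp only at h1
      rw [eq_iff_iff, ← key n, h1]
    have hHalt : ComputablePred fun c : Code => (c.eval 0).Dom := by
      obtain ⟨f, hf, hfe⟩ := ComputablePred.computable_iff.1 hKK
      refine ComputablePred.computable_iff.2
        ⟨fun c => f (Encodable.encode c), hf.comp Computable.encode, ?_⟩
      funext c
      have h1 := congrFun hfe (Encodable.encode c)
      rw [eq_iff_iff, ← h1, KK_iff, Denumerable.ofNat_encode]
    exact ComputablePred.halting_problem 0 hHalt
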